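/- Let K be a finite quiver and E a simple representation of K with Ext¹_K(E, E) = 0. Then E is isomorphic to a simple representation E_x concentrated at a single vertex x (with value k at x and 0 elsewhere). -/
import Mathlib

open Module

section aux

variable {k V E : Type} [Field k] [Fintype V] [Fintype E]
    (src tgt : E → V) (W : V → ModuleCat k)
    (f : ∀ e, W (src e) →ₗ[k] W (tgt e))

/-- The sum of all incoming edge maps into the vertex `v`. -/
noncomputable def phiAux (v : V) :
    (∀ e : {e : E // tgt e = v}, W (src e.1)) →ₗ[k] W v :=
  letI := Classical.decEq V
  ∑ e : {e : E // tgt e = v}, (e.2 ▸ f e.1).comp (LinearMap.proj e)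

lemma mem_phiAux_range (e : E) (x : W (src e)) :
    f e x ∈ LinearMap.range (phiAux src tgt W f (tgt e)) := by
  classical
  refine ⟨Pi.single (⟨e, rfl⟩ : {e' : E // tgt e' = tgt e}) x, ?_⟩
  rw [phiAux, LinearMap.sum_apply]
  rw [Finset.sum_eq_single (⟨e, rfl⟩ : {e' : E // tgt e' = tgt e})]
  · simp
  · intro b _ hb
    simp [LinearMap.comp_apply, Pi.single_eq_of_ne hb]
  · intro h
    exact absurd (Finset.mem_univ _) h

end aux

/-- A simple representation `E = (W, f)` of a finite quiver with `Ext¹(E, E) = 0`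
(expressed by surjectivity of the map `D` whose cokernel is `Ext¹`) is concentrated at a
single vertex, with value `k` there and `0` elsewhere. -/
theorem stmt_17 {k V E : Type} [Field k] [Fintype V] [Fintype E]
    (src tgt : E → V)
    (W : V → ModuleCat k) (hfd : ∀ v, FiniteDimensional k (W v))
    (f : ∀ e, W (src e) →ₗ[k] W (tgt e))
    (hsimple : (∃ v, ∃ x : W v, x ≠ 0) ∧
      ∀ U : ∀ v, Submodule k (W v),
        (∀ e, ∀ x ∈ U (src e), f e x ∈ U (tgt e)) →
          (∀ v, U v = ⊥) ∨ (∀ v, U v = ⊤))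
    (D : (∀ v, W v →ₗ[k] W v) →ₗ[k] (∀ e, W (src e) →ₗ[k] W (tgt e)))
    (hD : ∀ η e, D η e = f e ∘ₗ η (src e) - η (tgt e) ∘ₗ f e)
    (hext : Function.Surjective D) :
    ∃ x : V, Module.finrank k (W x) = 1 ∧ ∀ v, v ≠ x → Subsingleton (W v) := by
  classical
  obtain ⟨⟨v0, x0, hx0⟩, hsub⟩ := hsimple
  haveI : ∀ v, FiniteDimensional k (W v) := hfd
  rcases hsub (fun v => LinearMap.range (phiAux src tgt W f v))
      (fun e x _ => mem_phiAux_range src tgt W f e x) with hbot | htop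
  · -- all edge maps vanish
    have hf0 : ∀ e (x : W (src e)), f e x = 0 := by
      intro e x
      have h := mem_phiAux_range src tgt W f e x
      rw [hbot] at h
      simpa using h
    refine ⟨v0, ?_, ?_⟩
    · -- finrank = 1
      have hspan : Submodule.span k {x0} = ⊤ := by
        rcases hsub (Function.update (fun v => (⊥ : Submodule k (W v))) v0
            (Submodule.span k {x0}))
            (fun e x _ => by rw [hf0]; exact Submodule.zero_mem _) with h1 | h2
        · exfalso
          have h := h1 v0
          rw [Function.update_self] at h
          have : x0 ∈ (⊥ : Submodule k (W v0)) := h ▸ Submodule.mem_span_singleton_self x0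
          exact hx0 (by simpa using this)
        · have h := h2 v0
          rwa [Function.update_self] at h
      exact (finrank_eq_one_iff_of_nonzero x0 hx0).mpr hspan
    · intro v hv
      rcases hsub (fun w => if w = v then (⊥ : Submodule k (W w)) else ⊤)
          (fun e x _ => by rw [hf0]; exact Submodule.zero_mem _) with h1 | h2
      · exfalso
        have h := h1 v0
        rw [if_neg (Ne.symm hv)] at h
        have : x0 ∈ (⊥ : Submodule k (W v0)) := h ▸ Submodule.mem_top
        exact hx0 (by simpa using this)
      · have h := h2 v
        rw [if_pos rfl] at h
        refine ⟨fun a b => ?_⟩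
        have ha : a ∈ (⊥ : Submodule k (W v)) := h ▸ Submodule.mem_top
        have hb : b ∈ (⊥ : Submodule k (W v)) := h ▸ Submodule.mem_top
        rw [Submodule.mem_bot] at ha hb
        rw [ha, hb]
  · -- contradiction via dimension count
    exfalso
    set d : V → ℕ := fun v => finrank k (W v) with hd
    -- the identity is a nonzero element of the kernel of D
    set η0 : ∀ v, W v →ₗ[k] W v := fun _ => LinearMap.id with hη0
    have hker : η0 ∈ LinearMap.ker D := by
      rw [LinearMap.mem_ker]
      funext e
      rw [hD]
      simp [hη0]
    have hne : η0 ≠ 0 := by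
      intro h
      apply hx0
      have h1 : η0 v0 x0 = (0 : ∀ v, W v →ₗ[k] W v) v0 x0 := by rw [h]
      simpa [hη0] using h1
    have hkerpos : 0 < finrank k (LinearMap.ker D) := by
      rw [Module.finrank_pos_iff]
      exact ⟨⟨η0, hker⟩, 0, fun h => hne (congrArg Subtype.val h)⟩
    have hrange : LinearMap.range D = ⊤ := LinearMap.range_eq_top.mpr hext
    have rn := LinearMap.finrank_range_add_finrank_ker D
    rw [hrange, finrank_top] at rn
    have hdom : finrank k (∀ v, W v →ₗ[k] W v) = ∑ v, d v * d v := by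
      rw [Module.finrank_pi_fintype]
      exact Finset.sum_congr rfl fun v _ => Module.finrank_linearMap k k _ _
    have hcod : finrank k (∀ e, W (src e) →ₗ[k] W (tgt e))
        = ∑ e, d (src e) * d (tgt e) := by
      rw [Module.finrank_pi_fintype]
      exact Finset.sum_congr rfl fun e _ => Module.finrank_linearMap k k _ _
    -- per-vertex inequality from surjectivity of phiAux
    have hv_le : ∀ v, d v ≤ ∑ e : {e : E // tgt e = v}, d (src e.1) := by
      intro v
      have h1 : finrank k (LinearMap.range (phiAux src tgt W f v)) = d v := by
        rw [htop v]
        exact finrank_top k (W v)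
      have h2 := LinearMap.finrank_range_le (phiAux src tgt W f v)
      rw [h1, Module.finrank_pi_fintype] at h2
      exact h2
    have key : (∑ v, d v * d v) ≤ ∑ e, d (src e) * d (tgt e) := by
      calc ∑ v, d v * d v
          ≤ ∑ v, (∑ e : {e : E // tgt e = v}, d (src e.1)) * d v :=
            Finset.sum_le_sum fun v _ => Nat.mul_le_mul_right _ (hv_le v)
        _ = ∑ v, ∑ e : {e : E // tgt e = v}, d (src e.1) * d v := by
            simp [Finset.sum_mul]
        _ = ∑ v, ∑ e : {e : E // tgt e = v}, d (src e.1) * d (tgt e.1) := by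
            refine Finset.sum_congr rfl fun v _ => Finset.sum_congr rfl fun e _ => ?_
            rw [e.2]
        _ = ∑ p : Σ v, {e : E // tgt e = v}, d (src p.2.1) * d (tgt p.2.1) := by
            rw [← Finset.univ_sigma_univ, Finset.sum_sigma]
        _ = ∑ e, d (src e) * d (tgt e) :=
            Fintype.sum_equiv (Equiv.sigmaFiberEquiv tgt) _ _ (fun p => rfl)
    rw [hdom, hcod] at rn
    omega
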